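/- Limits of the variance factor: for fixed ξ₀ > 0 let ξ(α) = ξ₀/α and χ_V(α) = α ξ(α)² ∫ t (1 + ξ(α) t)^{-2} dμ_α(t). Then χ_V(α) → 0 both as α → 0⁺ and as α → ∞. -/

import Mathlib

open MeasureTheory Real Filter

/-- The Marchenko–Pastur distribution with ratio parameter `α`:
`μ_α = max(0, 1−1/α) δ₀ + (√((α₊−t)(t−α₋))/(2παt)) 1_{[α₋,α₊]}(t) dt`, `α_± = (1±√α)²`. -/
noncomputable def mpMeasure (α : ℝ) : Measure ℝ :=
  ENNReal.ofReal (max 0 (1 - 1 / α)) • Measure.dirac 0 +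
    volume.withDensity fun t => ENNReal.ofReal
      ((Set.Icc ((1 - Real.sqrt α) ^ 2) ((1 + Real.sqrt α) ^ 2)).indicator
        (fun s => Real.sqrt (((1 + Real.sqrt α) ^ 2 - s) * (s - (1 - Real.sqrt α) ^ 2)) /
          (2 * π * α * s)) t)


lemma mp_integral_bound (ξ : ℝ) (α : ℝ) (hα : 0 < α) (C : ℝ) (hC : 0 ≤ C)
    (hb : ∀ t ∈ Set.Icc ((1 - Real.sqrt α) ^ 2) ((1 + Real.sqrt α) ^ 2),
      ‖t * ((1 + ξ * t) ^ 2)⁻¹‖ *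
        (Real.sqrt (((1 + Real.sqrt α) ^ 2 - t) * (t - (1 - Real.sqrt α) ^ 2)) /
          (2 * π * α * t)) ≤ C) :
    ‖∫ t, t * ((1 + ξ * t) ^ 2)⁻¹ ∂(mpMeasure α)‖ ≤ C * (4 * Real.sqrt α) := by
  set f : ℝ → ℝ := fun t => t * ((1 + ξ * t) ^ 2)⁻¹ with hf
  set ρ : ℝ → ℝ := fun s => Real.sqrt (((1 + Real.sqrt α) ^ 2 - s) * (s - (1 - Real.sqrt α) ^ 2)) /
          (2 * π * α * s) with hρ
  set I : Set ℝ := Set.Icc ((1 - Real.sqrt α) ^ 2) ((1 + Real.sqrt α) ^ 2) with hI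
  have hmesf : Measurable fun t => ENNReal.ofReal ‖f t‖ := by
    apply Measurable.ennreal_ofReal
    apply Measurable.norm
    fun_prop
  have hmesρ : Measurable fun t => ENNReal.ofReal (I.indicator ρ t) := by
    apply Measurable.ennreal_ofReal
    apply Measurable.indicator _ measurableSet_Icc
    apply Measurable.div
    · fun_prop
    · fun_prop
  have key : ∫⁻ t, ENNReal.ofReal ‖f t‖ ∂(mpMeasure α) ≤ ENNReal.ofReal (C * (4 * Real.sqrt α)) := by
    rw [mpMeasure, lintegral_add_measure, lintegral_smul_measure, lintegral_dirac' _ hmesf]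
    have hf0 : f 0 = 0 := by simp [hf]
    rw [hf0]
    simp only [norm_zero, ENNReal.ofReal_zero, mul_zero, smul_zero, zero_add]
    rw [lintegral_withDensity_eq_lintegral_mul volume hmesρ hmesf]
    have hle : ∀ t, (fun t => ENNReal.ofReal (I.indicator ρ t)) t * ENNReal.ofReal ‖f t‖ ≤
        I.indicator (fun _ => ENNReal.ofReal C) t := by
      intro t
      by_cases ht : t ∈ I
      · have ht0 : (0:ℝ) ≤ t := le_trans (sq_nonneg _) ht.1
        have hρ0 : 0 ≤ ρ t := div_nonneg (Real.sqrt_nonneg _)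
          (by positivity)
        simp only [Set.indicator_of_mem ht]
        rw [← ENNReal.ofReal_mul hρ0]
        apply ENNReal.ofReal_le_ofReal
        rw [mul_comm]
        exact hb t ht
      · simp only [Set.indicator_of_notMem ht]
        simp
    calc ∫⁻ t, (fun t => ENNReal.ofReal (I.indicator ρ t)) t * ENNReal.ofReal ‖f t‖ ∂volume
        ≤ ∫⁻ t, I.indicator (fun _ => ENNReal.ofReal C) t ∂volume := lintegral_mono hle
      _ = ENNReal.ofReal C * volume I := lintegral_indicator_const measurableSet_Icc _
      _ = ENNReal.ofReal (C * (4 * Real.sqrt α)) := by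
          rw [hI, Real.volume_Icc]
          rw [← ENNReal.ofReal_mul hC]
          congr 1
          have : (1 + Real.sqrt α) ^ 2 - (1 - Real.sqrt α) ^ 2 = 4 * Real.sqrt α := by ring
          rw [this]
  calc ‖∫ t, f t ∂(mpMeasure α)‖ ≤ (∫⁻ t, ENNReal.ofReal ‖f t‖ ∂(mpMeasure α)).toReal :=
        norm_integral_le_lintegral_norm f
    _ ≤ C * (4 * Real.sqrt α) := by
        apply ENNReal.toReal_le_of_le_ofReal (by positivity) key

lemma hb_big (ξ α : ℝ) (hα : 0 < α) (hξ : 0 ≤ ξ) :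
    ∀ t ∈ Set.Icc ((1 - Real.sqrt α) ^ 2) ((1 + Real.sqrt α) ^ 2),
      ‖t * ((1 + ξ * t) ^ 2)⁻¹‖ *
        (Real.sqrt (((1 + Real.sqrt α) ^ 2 - t) * (t - (1 - Real.sqrt α) ^ 2)) /
          (2 * π * α * t)) ≤ 1 / (π * Real.sqrt α) := by
  intro t ht
  set s := Real.sqrt α with hs
  have hs0 : 0 < s := Real.sqrt_pos.mpr hα
  have hs2 : s ^ 2 = α := Real.sq_sqrt hα.le
  have ht0 : (0:ℝ) ≤ t := le_trans (sq_nonneg _) ht.1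
  have hX : Real.sqrt (((1 + s) ^ 2 - t) * (t - (1 - s) ^ 2)) ≤ 2 * s := by
    have h1 : ((1 + s) ^ 2 - t) * (t - (1 - s) ^ 2) ≤ (2 * s) ^ 2 := by
      nlinarith [ht.1, ht.2, sq_nonneg ((1 + s) ^ 2 + (1 - s) ^ 2 - 2 * t)]
    calc Real.sqrt (((1 + s) ^ 2 - t) * (t - (1 - s) ^ 2)) ≤ Real.sqrt ((2 * s) ^ 2) :=
          Real.sqrt_le_sqrt h1
      _ = 2 * s := Real.sqrt_sq (by positivity)
  rcases eq_or_lt_of_le ht0 with h0 | htpos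
  · rw [← h0]
    simp
    positivity
  · have hnorm : ‖t * ((1 + ξ * t) ^ 2)⁻¹‖ ≤ t := by
      rw [Real.norm_of_nonneg (by positivity)]
      have h2 : (1:ℝ) ≤ (1 + ξ * t) ^ 2 := by nlinarith [mul_nonneg hξ ht0]
      calc t * ((1 + ξ * t) ^ 2)⁻¹ ≤ t * 1 := by
            apply mul_le_mul_of_nonneg_left _ ht0
            exact inv_le_one_of_one_le₀ h2
        _ = t := mul_one t
    have hρ0 : 0 ≤ Real.sqrt (((1 + s) ^ 2 - t) * (t - (1 - s) ^ 2)) / (2 * π * α * t) := by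
      positivity
    calc ‖t * ((1 + ξ * t) ^ 2)⁻¹‖ *
          (Real.sqrt (((1 + s) ^ 2 - t) * (t - (1 - s) ^ 2)) / (2 * π * α * t))
        ≤ t * (Real.sqrt (((1 + s) ^ 2 - t) * (t - (1 - s) ^ 2)) / (2 * π * α * t)) :=
          mul_le_mul_of_nonneg_right hnorm hρ0
      _ = Real.sqrt (((1 + s) ^ 2 - t) * (t - (1 - s) ^ 2)) / (2 * π * α) := by
          field_simp
      _ ≤ (2 * s) / (2 * π * α) := by
          apply div_le_div_of_nonneg_right hX -- maybe wrong name; will fix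
          positivity
      _ = 1 / (π * s) := by
          rw [← hs2]
          field_simp

lemma hb_small (ξ₀ α : ℝ) (hξ₀ : 0 < ξ₀) (hα : 0 < α) (hs2' : Real.sqrt α ≤ 1/2) :
    ∀ t ∈ Set.Icc ((1 - Real.sqrt α) ^ 2) ((1 + Real.sqrt α) ^ 2),
      ‖t * ((1 + (ξ₀ / α) * t) ^ 2)⁻¹‖ *
        (Real.sqrt (((1 + Real.sqrt α) ^ 2 - t) * (t - (1 - Real.sqrt α) ^ 2)) /
          (2 * π * α * t)) ≤ 16 * Real.sqrt α * α / (π * ξ₀ ^ 2) := by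
  intro t ht
  set s := Real.sqrt α with hs
  have hs0 : 0 < s := Real.sqrt_pos.mpr hα
  have hs2 : s ^ 2 = α := Real.sq_sqrt hα.le
  have ht4 : (1:ℝ)/4 ≤ t := by
    have : (1:ℝ)/4 ≤ (1 - s) ^ 2 := by nlinarith
    linarith [ht.1]
  have ht0 : (0:ℝ) < t := by linarith
  have hX : Real.sqrt (((1 + s) ^ 2 - t) * (t - (1 - s) ^ 2)) ≤ 2 * s := by
    have h1 : ((1 + s) ^ 2 - t) * (t - (1 - s) ^ 2) ≤ (2 * s) ^ 2 := by
      nlinarith [ht.1, ht.2, sq_nonneg ((1 + s) ^ 2 + (1 - s) ^ 2 - 2 * t)]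
    calc Real.sqrt (((1 + s) ^ 2 - t) * (t - (1 - s) ^ 2)) ≤ Real.sqrt ((2 * s) ^ 2) :=
          Real.sqrt_le_sqrt h1
      _ = 2 * s := Real.sqrt_sq (by positivity)
  have hξ : 0 < ξ₀ / α := by positivity
  have hnorm : ‖t * ((1 + (ξ₀ / α) * t) ^ 2)⁻¹‖ ≤ 4 * α ^ 2 / ξ₀ ^ 2 := by
    rw [Real.norm_of_nonneg (by positivity)]
    have hu0 : 0 < (ξ₀ / α) * t := by positivity
    have hpos : (0:ℝ) < (1 + (ξ₀ / α) * t) ^ 2 := by positivity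
    rw [← div_eq_mul_inv, div_le_iff₀ hpos]
    have hmono : ((ξ₀ / α) * t) ^ 2 ≤ (1 + (ξ₀ / α) * t) ^ 2 := by nlinarith
    have hu : (4 * α ^ 2 / ξ₀ ^ 2) * (((ξ₀ / α) * t) ^ 2) = 4 * t ^ 2 := by
      field_simp
    have c0 : (0:ℝ) ≤ 4 * α ^ 2 / ξ₀ ^ 2 := by positivity
    have h3 := mul_le_mul_of_nonneg_left hmono c0
    nlinarith [h3, hu, ht4]
  have hρ : Real.sqrt (((1 + s) ^ 2 - t) * (t - (1 - s) ^ 2)) / (2 * π * α * t)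
      ≤ 4 * s / (π * α) := by
    have hd : (0:ℝ) < π * α / 2 := by positivity
    have hbd : π * α / 2 ≤ 2 * π * α * t := by nlinarith [Real.pi_pos]
    calc Real.sqrt (((1 + s) ^ 2 - t) * (t - (1 - s) ^ 2)) / (2 * π * α * t)
        ≤ (2 * s) / (π * α / 2) := div_le_div₀ (by positivity) hX hd hbd
      _ = 4 * s / (π * α) := by field_simp; ring
  have hρ0 : 0 ≤ Real.sqrt (((1 + s) ^ 2 - t) * (t - (1 - s) ^ 2)) / (2 * π * α * t) := by
    positivity
  calc ‖t * ((1 + (ξ₀ / α) * t) ^ 2)⁻¹‖ *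
        (Real.sqrt (((1 + s) ^ 2 - t) * (t - (1 - s) ^ 2)) / (2 * π * α * t))
      ≤ (4 * α ^ 2 / ξ₀ ^ 2) * (4 * s / (π * α)) :=
        mul_le_mul hnorm hρ hρ0 (by positivity)
    _ = 16 * s * α / (π * ξ₀ ^ 2) := by field_simp; ring

/-- Limits of the variance factor `χ_V(α) = α (ξ₀/α)² ∫ t (1 + (ξ₀/α) t)^{-2} dμ_α(t)`:
`χ_V(α) → 0` both as `α → 0⁺` and as `α → ∞`. -/
theorem mp_variance_factor_limits (ξ₀ : ℝ) (hξ₀ : 0 < ξ₀) :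
    Tendsto (fun α : ℝ => α * (ξ₀ / α) ^ 2 * ∫ t, t * ((1 + (ξ₀ / α) * t) ^ 2)⁻¹ ∂(mpMeasure α))
      (nhdsWithin 0 (Set.Ioi 0)) (nhds 0) ∧
    Tendsto (fun α : ℝ => α * (ξ₀ / α) ^ 2 * ∫ t, t * ((1 + (ξ₀ / α) * t) ^ 2)⁻¹ ∂(mpMeasure α))
      atTop (nhds 0) := by
  constructor
  · apply squeeze_zero_norm' (a := fun α : ℝ => 64 * α / π)
    · have hmem : Set.Ioo (0:ℝ) (1/4) ∈ nhdsWithin (0:ℝ) (Set.Ioi 0) :=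
        Ioo_mem_nhdsGT_of_mem (by norm_num)
      filter_upwards [hmem] with α hα'
      obtain ⟨hα, hα4⟩ := hα'
      have hs2' : Real.sqrt α ≤ 1/2 := by
        have h1 : Real.sqrt α ≤ Real.sqrt (1/4) := Real.sqrt_le_sqrt hα4.le
        have h2 : Real.sqrt (1/4 : ℝ) = 1/2 := by
          rw [show (1/4:ℝ) = (1/2)^2 by norm_num, Real.sqrt_sq (by norm_num)]
        linarith
      have hb := mp_integral_bound (ξ₀ / α) α hα (16 * Real.sqrt α * α / (π * ξ₀ ^ 2))
        (by positivity) (hb_small ξ₀ α hξ₀ hα hs2')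
      have hss : Real.sqrt α * Real.sqrt α = α := Real.mul_self_sqrt hα.le
      rw [norm_mul, Real.norm_of_nonneg (by positivity : (0:ℝ) ≤ α * (ξ₀ / α) ^ 2)]
      calc α * (ξ₀ / α) ^ 2 * ‖∫ t, t * ((1 + (ξ₀ / α) * t) ^ 2)⁻¹ ∂(mpMeasure α)‖
          ≤ α * (ξ₀ / α) ^ 2 * (16 * Real.sqrt α * α / (π * ξ₀ ^ 2) * (4 * Real.sqrt α)) :=
            mul_le_mul_of_nonneg_left hb (by positivity)
        _ = 64 * α / π := by
            field_simp
            linear_combination 64 * hss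
    · have : Tendsto (fun α : ℝ => 64 * α / π) (nhds 0) (nhds (64 * 0 / π)) := by
        apply Tendsto.div_const
        exact tendsto_const_nhds.mul tendsto_id
      simpa using this.mono_left nhdsWithin_le_nhds
  · apply squeeze_zero_norm' (a := fun α : ℝ => 4 * ξ₀ ^ 2 / π / α)
    · filter_upwards [eventually_gt_atTop (0:ℝ)] with α hα
      have hs0 : 0 < Real.sqrt α := Real.sqrt_pos.mpr hα
      have hb := mp_integral_bound (ξ₀ / α) α hα (1 / (π * Real.sqrt α))
        (by positivity) (hb_big (ξ₀ / α) α hα (by positivity))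
      rw [norm_mul, Real.norm_of_nonneg (by positivity : (0:ℝ) ≤ α * (ξ₀ / α) ^ 2)]
      calc α * (ξ₀ / α) ^ 2 * ‖∫ t, t * ((1 + (ξ₀ / α) * t) ^ 2)⁻¹ ∂(mpMeasure α)‖
          ≤ α * (ξ₀ / α) ^ 2 * (1 / (π * Real.sqrt α) * (4 * Real.sqrt α)) :=
            mul_le_mul_of_nonneg_left hb (by positivity)
        _ = 4 * ξ₀ ^ 2 / π / α := by
            field_simp
    · exact Tendsto.div_atTop tendsto_const_nhds tendsto_id
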